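/- Let Δ ⊂ ℝⁿ be a bounded rational polyhedron. A formal Laurent series f = Σ_{ν∈ℤⁿ} a_ν z^ν over the Novikov field Λ belongs to the polyhedral affinoid algebra Λ⟨Δ⟩ if and only if f(y) converges (in the adic topology of Λ) at every point y ∈ trop⁻¹(Δ), i.e. at every y = (y₁,...,yₙ) ∈ (Λ*)ⁿ with (val(y₁),...,val(yₙ)) ∈ Δ. -/

import Mathlib

/-!
STATEMENT: let `Δ ⊂ ℝⁿ` be a bounded rational polyhedron.  A formal Laurent
series `f = Σ_{ν ∈ ℤⁿ} a_ν z^ν` over the Novikov field `Λ` lies in the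
polyhedral affinoid algebra `Λ⟨Δ⟩` (i.e. `val(a_ν) + ν·u → ∞` as `|ν| → ∞`
for every `u ∈ Δ`) iff `f(y)` converges adically at every point
`y ∈ trop⁻¹(Δ)`, i.e. at every `y ∈ (Λ*)ⁿ` with `(val y₁, …, val yₙ) ∈ Δ`.
Here "`g ν → ∞` as `|ν| → ∞`" means: for every `M ∈ ℝ`, only finitely many
`ν` satisfy `g ν ≤ M`; convergence of a series in a non-archimedean field
means its terms have valuations tending to `∞` in this sense.
-/

/-- The Novikov field `Λ = ℂ((T^ℝ))`. -/
noncomputable abbrev Novikov : Type := HahnSeries ℝ ℂ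

/-- The non-archimedean valuation `val : Λ → ℝ ∪ {∞}`. -/
noncomputable def nval : AddValuation Novikov (WithTop ℝ) := HahnSeries.addVal ℝ ℂ

/-- `f ν → ∞` as `|ν| → ∞`, for `WithTop ℝ`-valued nets indexed by `ℤⁿ`. -/
def TendsToInftyOnZn {n : ℕ} (f : (Fin n → ℤ) → WithTop ℝ) : Prop :=
  ∀ M : ℝ, {ν : Fin n → ℤ | f ν ≤ (M : WithTop ℝ)}.Finite

/-- A rational polyhedron in `ℝⁿ`: cut out by finitely many inequalities
`Σ_j b_{ij} x_j ≥ c_i` with integer coefficients `b_{ij}`. -/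
def IsRationalPolyhedron {n : ℕ} (Δ : Set (Fin n → ℝ)) : Prop :=
  ∃ (m : ℕ) (b : Fin m → Fin n → ℤ) (cst : Fin m → ℝ),
    Δ = {u | ∀ i, cst i ≤ ∑ j, (b i j : ℝ) * u j}

lemma nval_zpow (y : Novikov) (hy : y ≠ 0) (v : ℝ) (hv : nval y = (v : WithTop ℝ))
    (k : ℤ) : nval (y ^ k) = (((k : ℝ) * v : ℝ) : WithTop ℝ) := by
  cases k with
  | ofNat m =>
      rw [Int.ofNat_eq_coe, zpow_natCast, AddValuation.map_pow, hv,
        ← WithTop.coe_nsmul]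
      push_cast [nsmul_eq_mul]
      ring_nf
  | negSucc m =>
      rw [zpow_negSucc, AddValuation.map_inv, AddValuation.map_pow, hv,
        ← WithTop.coe_nsmul, ← WithTop.LinearOrderedAddCommGroup.coe_neg,
        WithTop.coe_eq_coe]
      push_cast [nsmul_eq_mul]
      ring

lemma nval_prod {ι : Type*} (s : Finset ι) (f : ι → Novikov) :
    nval (∏ i ∈ s, f i) = ∑ i ∈ s, nval (f i) := by
  classical
  induction s using Finset.induction with
  | empty => simp [AddValuation.map_one]
  | insert _ _ h ih => rw [Finset.prod_insert h, Finset.sum_insert h,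
      AddValuation.map_mul, ih]

lemma key_eq (n : ℕ) (a : (Fin n → ℤ) → Novikov) (y : Fin n → Novikov)
    (hy : ∀ i, y i ≠ 0) (v : Fin n → ℝ) (hv : ∀ i, nval (y i) = (v i : WithTop ℝ))
    (ν : Fin n → ℤ) :
    nval (a ν * ∏ i, y i ^ ν i)
      = nval (a ν) + ((∑ j, (ν j : ℝ) * v j : ℝ) : WithTop ℝ) := by
  rw [AddValuation.map_mul, nval_prod]
  congr 1
  rw [Finset.sum_congr rfl fun i _ => nval_zpow (y i) (hy i) (v i) (hv i) (ν i)]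
  exact (WithTop.coe_sum _ _).symm

theorem polyhedral_affinoid_mem_iff_converges (n : ℕ) (Δ : Set (Fin n → ℝ))
    (hpoly : IsRationalPolyhedron Δ) (hbdd : Bornology.IsBounded Δ)
    (a : (Fin n → ℤ) → Novikov) :
    -- `f ∈ Λ⟨Δ⟩` :
    (∀ u ∈ Δ, TendsToInftyOnZn fun ν =>
        nval (a ν) + ((∑ j, (ν j : ℝ) * u j : ℝ) : WithTop ℝ))
    ↔
    -- `f` converges at every point `y` of the polytopal domain `trop⁻¹(Δ)` :
    (∀ y : Fin n → Novikov, (∀ i, y i ≠ 0) →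
        (∃ v : Fin n → ℝ, (∀ i, nval (y i) = (v i : WithTop ℝ)) ∧ v ∈ Δ) →
        TendsToInftyOnZn fun ν => nval (a ν * ∏ i, y i ^ ν i)) := by
  constructor
  · rintro h y hy ⟨v, hv, hvΔ⟩
    have := h v hvΔ
    have hfun : (fun ν => nval (a ν * ∏ i, y i ^ ν i))
        = fun ν => nval (a ν) + ((∑ j, (ν j : ℝ) * v j : ℝ) : WithTop ℝ) :=
      funext fun ν => key_eq n a y hy v hv ν
    rw [hfun]
    exact this
  · intro h u hu
    set y : Fin n → Novikov := fun i => HahnSeries.single (u i) (1 : ℂ) with hy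
    have hy0 : ∀ i, y i ≠ 0 := fun i => HahnSeries.single_ne_zero one_ne_zero
    have hyv : ∀ i, nval (y i) = (u i : WithTop ℝ) := by
      intro i
      rw [nval, HahnSeries.addVal_apply_of_ne (hy0 i), HahnSeries.order_single one_ne_zero]
    have := h y hy0 ⟨u, hyv, hu⟩
    have hfun : (fun ν => nval (a ν * ∏ i, y i ^ ν i))
        = fun ν => nval (a ν) + ((∑ j, (ν j : ℝ) * u j : ℝ) : WithTop ℝ) :=
      funext fun ν => key_eq n a y hy0 u hyv ν
    rw [← hfun]
    exact this
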